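/- Let E be a real inner product space and let p, q : ℝ → E be curves such that p has derivative v and q has derivative w at time t (HasDerivAt), and p(t) ≠ q(t). Then the function s ↦ dist(p(s), q(s)) has derivative −(‖v‖·cos ∠(v, q(t) − p(t)) + ‖w‖·cos ∠(w, p(t) − q(t))) at t, where ∠ denotes the angle between two vectors (InnerProductGeometry.angle). -/

import Mathlib

open Real InnerProductGeometry

theorem stmt10 {E : Type*} [NormedAddCommGroup E] [InnerProductSpace ℝ E]
    (p q : ℝ → E) (v w : E) (t : ℝ)
    (hp : HasDerivAt p v t) (hq : HasDerivAt q w t) (hpq : p t ≠ q t) :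
    HasDerivAt (fun s => dist (p s) (q s))
      (-(‖v‖ * cos (angle v (q t - p t)) + ‖w‖ * cos (angle w (p t - q t)))) t := by
  have hd : p t - q t ≠ 0 := sub_ne_zero.2 hpq
  have hdn : ‖p t - q t‖ ≠ 0 := norm_ne_zero_iff.2 hd
  have h1 : HasDerivAt (fun s => ‖p s - q s‖ ^ 2)
      (2 * (inner ℝ (p t - q t) (v - w) : ℝ)) t := (hp.sub hq).norm_sq
  have h2 := h1.sqrt (by positivity)
  have hsq : ∀ x : E, Real.sqrt (‖x‖ ^ 2) = ‖x‖ := fun x =>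
    Real.sqrt_sq (norm_nonneg x)
  simp only [hsq] at h2
  have h3 : HasDerivAt (fun s => dist (p s) (q s))
      ((inner ℝ (p t - q t) (v - w) : ℝ) / ‖p t - q t‖) t := by
    simp only [dist_eq_norm]
    convert h2 using 1
    rw [mul_div_mul_left _ _ (two_ne_zero)]
  convert h3 using 1
  have key : ∀ x y : E, y ≠ 0 → ‖x‖ * cos (angle x y) = (inner ℝ x y : ℝ) / ‖y‖ := by
    intro x y hy
    rw [cos_angle, mul_div_assoc']
    rcases eq_or_ne x 0 with rfl | hx
    · simp
    · exact mul_div_mul_left _ _ (norm_ne_zero_iff.2 hx)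
  rw [key v _ (sub_ne_zero.2 (Ne.symm hpq)), key w _ hd, norm_sub_rev (q t)]
  simp only [inner_sub_left, inner_sub_right]
  rw [real_inner_comm (p t) v, real_inner_comm (p t) w, real_inner_comm (q t) v,
    real_inner_comm (q t) w]
  field_simp
  ring
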